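/- The three elements ∞ = (1,0), 0 = (0,1), and 1 = (1,1) of Q̂ are pairwise ⊥-related, and they generate Q̂ under the product operation: the smallest subset X of Q̂ containing {∞, 0, 1} and closed under the operation (α, β) ↦ (p + λp', q + λq') (for α ⊥ β with λ the determinant) is all of Q̂. -/
import Mathlib


/-- The determinant of two integer vectors. -/
def det (v w : ℤ × ℤ) : ℤ := v.1 * w.2 - w.1 * v.2

/-- The unimodular (Farey) relation: determinant `±1`. -/
def FareyPair (v w : ℤ × ℤ) : Prop := det v w = 1 ∨ det v w = -1

/-- Coprime integer pairs. -/
abbrev CP : Type := {v : ℤ × ℤ // IsCoprime v.1 v.2}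

instance cpSetoid : Setoid CP where
  r v w := v.1 = w.1 ∨ v.1 = -w.1
  iseqv := by
    refine ⟨fun _ => Or.inl rfl, ?_, ?_⟩
    · rintro v w (h | h)
      · exact Or.inl h.symm
      · exact Or.inr (by rw [h, neg_neg])
    · rintro u v w (h1 | h1) (h2 | h2)
      · exact Or.inl (h1.trans h2)
      · exact Or.inr (h1.trans h2)
      · exact Or.inr (by rw [h1, h2])
      · exact Or.inl (by rw [h1, h2, neg_neg])

/-- `Q̂ = Q ∪ {∞}`: coprime integer pairs up to sign. -/
def Qhat : Type := Quotient cpSetoid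

def Qhat.mk (v : ℤ × ℤ) (h : IsCoprime v.1 v.2) : Qhat := ⟦⟨v, h⟩⟧

lemma det_neg_left (v w : ℤ × ℤ) : det (-v) w = -(det v w) := by
  simp only [det, Prod.fst_neg, Prod.snd_neg]; ring

lemma det_neg_right (v w : ℤ × ℤ) : det v (-w) = -(det v w) := by
  simp only [det, Prod.fst_neg, Prod.snd_neg]; ring

lemma fareyPair_neg_left (v w : ℤ × ℤ) : FareyPair (-v) w ↔ FareyPair v w := by
  unfold FareyPair; rw [det_neg_left]; omega

lemma fareyPair_neg_right (v w : ℤ × ℤ) : FareyPair v (-w) ↔ FareyPair v w := by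
  unfold FareyPair; rw [det_neg_right]; omega

lemma farey_well {a b a' b' : CP} (ha : a ≈ a') (hb : b ≈ b') :
    FareyPair a.1 b.1 ↔ FareyPair a'.1 b'.1 := by
  rcases ha with h | h <;> rcases hb with h' | h' <;> rw [h, h'] <;>
    simp [fareyPair_neg_left, fareyPair_neg_right]

/-- The Farey relation on `Q̂`. -/
def Frel : Qhat → Qhat → Prop :=
  Quotient.lift₂ (fun v w : CP => FareyPair v.1 w.1)
    (fun _ _ _ _ ha hb => propext (farey_well ha hb))

/-- The product (signed mediant): for `λ = det v w`, `(p + λ p', q + λ q')`. -/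
def fmul (v w : ℤ × ℤ) : ℤ × ℤ := (v.1 + det v w * w.1, v.2 + det v w * w.2)

lemma isCoprime_of_det {v w : ℤ × ℤ} (h : det v w = 1 ∨ det v w = -1) :
    IsCoprime v.1 v.2 := by
  rcases h with h | h
  · exact ⟨w.2, -w.1, by simp only [det] at h; linarith [h]⟩
  · exact ⟨-w.2, w.1, by simp only [det] at h; linarith [h]⟩

lemma isCoprime_fmul {v w : ℤ × ℤ} (h : FareyPair v w) :
    IsCoprime (fmul v w).1 (fmul v w).2 := by
  have h2 : det v w * det v w = 1 := by rcases h with h | h <;> rw [h] <;> ring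
  refine ⟨det v w * w.2, -(det v w * w.1), ?_⟩
  simp only [fmul, det] at h2 ⊢
  linear_combination h2

/-- The product on `Q̂`, defined for Farey-related representatives. -/
def qprod (v w : CP) (h : FareyPair v.1 w.1) : Qhat :=
  Qhat.mk (fmul v.1 w.1) (isCoprime_fmul h)

/-- Height `|p| + |q|` on `Q̂`. -/
def qheight : Qhat → ℕ :=
  Quotient.lift (fun v : CP => v.1.1.natAbs + v.1.2.natAbs)
    (by rintro v w (h | h) <;>
      simp only [h, Prod.fst_neg, Prod.snd_neg, Int.natAbs_neg])

/-- Action of an integer matrix on `ℤ × ℤ`. -/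
def matAct (A : Matrix (Fin 2) (Fin 2) ℤ) (v : ℤ × ℤ) : ℤ × ℤ :=
  (A 0 0 * v.1 + A 0 1 * v.2, A 1 0 * v.1 + A 1 1 * v.2)

lemma det_matAct (A : Matrix (Fin 2) (Fin 2) ℤ) (v w : ℤ × ℤ) :
    det (matAct A v) (matAct A w) = A.det * det v w := by
  simp only [matAct, det, Matrix.det_fin_two]; ring

lemma isCoprime_matAct (A : GL (Fin 2) ℤ) (v : ℤ × ℤ) (h : IsCoprime v.1 v.2) :
    IsCoprime (matAct (A : Matrix (Fin 2) (Fin 2) ℤ) v).1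
      (matAct (A : Matrix (Fin 2) (Fin 2) ℤ) v).2 := by
  obtain ⟨x, y, hxy⟩ := h
  have hdv : det v (-y, x) = 1 := by simp only [det]; linarith [hxy]
  have hdA : (A : Matrix (Fin 2) (Fin 2) ℤ).det = 1 ∨
      (A : Matrix (Fin 2) (Fin 2) ℤ).det = -1 := by
    have : IsUnit (A : Matrix (Fin 2) (Fin 2) ℤ).det :=
      (Matrix.isUnit_iff_isUnit_det _).mp A.isUnit
    rwa [Int.isUnit_iff] at this
  apply isCoprime_of_det (w := matAct (A : Matrix (Fin 2) (Fin 2) ℤ) (-y, x))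
  rw [det_matAct, hdv, mul_one]
  exact hdA

lemma matAct_neg (A : Matrix (Fin 2) (Fin 2) ℤ) (v : ℤ × ℤ) :
    matAct A (-v) = -(matAct A v) := by
  simp only [matAct, Prod.fst_neg, Prod.snd_neg, Prod.neg_mk, Prod.mk.injEq]
  constructor <;> ring

/-- The action of `GL(2,ℤ)` on `Q̂`. -/
def qAct (A : GL (Fin 2) ℤ) : Qhat → Qhat :=
  Quotient.lift
    (fun v : CP => (⟦⟨matAct (A : Matrix (Fin 2) (Fin 2) ℤ) v.1,
      isCoprime_matAct A v.1 v.2⟩⟧ : Qhat))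
    (by
      rintro v w (h | h)
      · exact Quotient.sound
          (Or.inl (congrArg (matAct (A : Matrix (Fin 2) (Fin 2) ℤ)) h))
      · refine Quotient.sound (Or.inr ?_)
        show matAct (A : Matrix (Fin 2) (Fin 2) ℤ) v.1 =
          -(matAct (A : Matrix (Fin 2) (Fin 2) ℤ) w.1)
        rw [h, matAct_neg])

lemma isCoprime_one_zero : IsCoprime (1 : ℤ) (0 : ℤ) := isCoprime_one_left
lemma isCoprime_zero_one : IsCoprime (0 : ℤ) (1 : ℤ) := isCoprime_one_right
lemma isCoprime_one_one : IsCoprime (1 : ℤ) (1 : ℤ) := isCoprime_one_left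

/-- The point `∞ = (1,0)`. -/
def qinf : Qhat := Qhat.mk (1, 0) isCoprime_one_zero
/-- The point `0 = (0,1)`. -/
def qzero : Qhat := Qhat.mk (0, 1) isCoprime_zero_one
/-- The point `1 = (1,1)`. -/
def qone : Qhat := Qhat.mk (1, 1) isCoprime_one_one

lemma parents (p q : ℤ) (hp : 0 < p) (hq : 0 < q) (h : IsCoprime p q) :
    ∃ a b : ℤ, 1 ≤ a ∧ a ≤ p ∧ 0 ≤ b ∧ b < q ∧ a * q - b * p = 1 := by
  obtain ⟨x, y, hxy⟩ := h
  set t : ℤ := -((y - 1) / p) with ht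
  set a : ℤ := y + t * p with ha
  set b : ℤ := -x + t * q with hb
  have heq : a * q - b * p = 1 := by
    rw [ha, hb]; ring_nf; linarith [hxy]
  have hmod : a - 1 = (y - 1) % p := by
    rw [ha, ht, Int.emod_def]; ring
  have h1 : 1 ≤ a := by
    have := Int.emod_nonneg (y - 1) (ne_of_gt hp); omega
  have h2 : a ≤ p := by
    have := Int.emod_lt_of_pos (y - 1) hp; omega
  have hbp : b * p = a * q - 1 := by linarith [heq]
  have hb0 : 0 ≤ b := by nlinarith
  have hbq : b < q := by nlinarith
  exact ⟨a, b, h1, h2, hb0, hbq, heq⟩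

lemma qmk_eq {v w : ℤ × ℤ} (hv : IsCoprime v.1 v.2) (hw : IsCoprime w.1 w.2)
    (h : v = w ∨ v = -w) : Qhat.mk v hv = Qhat.mk w hw :=
  Quotient.sound h

theorem stmt_8 :
    (Frel qinf qzero ∧ Frel qzero qone ∧ Frel qinf qone) ∧
    (∀ X : Set Qhat, qinf ∈ X → qzero ∈ X → qone ∈ X →
      (∀ (v w : CP) (h : FareyPair v.1 w.1),
        (⟦v⟧ : Qhat) ∈ X → (⟦w⟧ : Qhat) ∈ X → qprod v w h ∈ X) →
      X = Set.univ) := by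
  constructor
  · exact ⟨Or.inl rfl, Or.inr rfl, Or.inl rfl⟩
  · intro X hinf h0 h1 hcl
    have key : ∀ n : ℕ, ∀ v : CP, v.1.1.natAbs + v.1.2.natAbs ≤ n →
        (⟦v⟧ : Qhat) ∈ X := by
      intro n
      induction n with
      | zero =>
        rintro ⟨⟨p, q⟩, hc⟩ hn
        simp only at hn
        have hp : p = 0 := by omega
        have hq : q = 0 := by omega
        subst hp; subst hq
        exact absurd hc not_isCoprime_zero_zero
      | succ n IH =>
        have pos : ∀ (p q : ℤ) (hc : IsCoprime p q), 0 < p →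
            p.natAbs + q.natAbs ≤ n + 1 →
            ((⟦⟨(p, q), hc⟩⟧ : Qhat) : Qhat) ∈ X := by
          intro p q hc hp hn
          rcases lt_trichotomy q 0 with hq | hq | hq
          · -- q < 0
            obtain ⟨a, b, ha1, ha2, hb0, hbq, heq⟩ :=
              parents p (-q) hp (by omega) hc.neg_right
            have hd : det (p - a, q + b) (a, -b) = 1 := by
              simp only [det]; nlinarith [heq]
            have hc1 : IsCoprime ((p - a, q + b) : ℤ × ℤ).1 (p - a, q + b).2 :=
              isCoprime_of_det (w := (a, -b)) (Or.inl hd)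
            have hd2 : det (a, -b) (p - a, q + b) = -1 := by
              simp only [det] at hd ⊢; nlinarith [hd]
            have hc2 : IsCoprime ((a, -b) : ℤ × ℤ).1 (a, -b).2 :=
              isCoprime_of_det (w := (p - a, q + b)) (Or.inr hd2)
            have hm1 : (⟦⟨(p - a, q + b), hc1⟩⟧ : Qhat) ∈ X := by
              apply IH; simp only; omega
            have hm2 : (⟦⟨(a, -b), hc2⟩⟧ : Qhat) ∈ X := by
              apply IH; simp only; omega
            have hmem := hcl ⟨(p - a, q + b), hc1⟩ ⟨(a, -b), hc2⟩ (Or.inl hd) hm1 hm2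
            have hfe : qprod ⟨(p - a, q + b), hc1⟩ ⟨(a, -b), hc2⟩ (Or.inl hd) =
                (⟦⟨(p, q), hc⟩⟧ : Qhat) := by
              apply qmk_eq
              left
              show fmul (p - a, q + b) (a, -b) = (p, q)
              simp only [fmul, hd]
              simp only [Prod.mk.injEq]
              constructor <;> ring
            rwa [hfe] at hmem
          · -- q = 0
            subst hq
            have hu : IsUnit p := isCoprime_zero_right.mp hc
            have hp1 : p = 1 := by
              rcases Int.isUnit_iff.mp hu with h | h <;> omega
            subst hp1
            exact hinf
          · -- q > 0
            obtain ⟨a, b, ha1, ha2, hb0, hbq, heq⟩ := parents p q hp hq hc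
            have hd : det (a, b) (p - a, q - b) = 1 := by
              simp only [det]; nlinarith [heq]
            have hc1 : IsCoprime ((a, b) : ℤ × ℤ).1 (a, b).2 :=
              isCoprime_of_det (w := (p - a, q - b)) (Or.inl hd)
            have hd2 : det (p - a, q - b) (a, b) = -1 := by
              simp only [det] at hd ⊢; nlinarith [hd]
            have hc2 : IsCoprime ((p - a, q - b) : ℤ × ℤ).1 (p - a, q - b).2 :=
              isCoprime_of_det (w := (a, b)) (Or.inr hd2)
            have hm1 : (⟦⟨(a, b), hc1⟩⟧ : Qhat) ∈ X := by
              apply IH; simp only; omega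
            have hm2 : (⟦⟨(p - a, q - b), hc2⟩⟧ : Qhat) ∈ X := by
              apply IH; simp only; omega
            have hmem := hcl ⟨(a, b), hc1⟩ ⟨(p - a, q - b), hc2⟩ (Or.inl hd) hm1 hm2
            have hfe : qprod ⟨(a, b), hc1⟩ ⟨(p - a, q - b), hc2⟩ (Or.inl hd) =
                (⟦⟨(p, q), hc⟩⟧ : Qhat) := by
              apply qmk_eq
              left
              show fmul (a, b) (p - a, q - b) = (p, q)
              simp only [fmul, hd]
              simp only [Prod.mk.injEq]
              constructor <;> ring
            rwa [hfe] at hmem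
        rintro ⟨⟨p, q⟩, hc⟩ hn
        simp only at hn
        rcases lt_trichotomy p 0 with hp | hp | hp
        · have hc' : IsCoprime ((-p, -q) : ℤ × ℤ).1 (-p, -q).2 :=
            hc.neg_left.neg_right
          have he : (⟦(⟨(p, q), hc⟩ : CP)⟧ : Qhat) = ⟦⟨(-p, -q), hc'⟩⟧ := by
            apply Quotient.sound
            right
            show ((p, q) : ℤ × ℤ) = -(-p, -q)
            simp
          rw [he]
          exact pos (-p) (-q) hc' (by omega) (by omega)
        · subst hp
          have hu : IsUnit q := isCoprime_zero_left.mp hc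
          rcases Int.isUnit_iff.mp hu with h | h
          · subst h; exact h0
          · subst h
            have he : (⟦(⟨(0, -1), hc⟩ : CP)⟧ : Qhat) = qzero := by
              apply Quotient.sound
              right
              show ((0, -1) : ℤ × ℤ) = -(0, 1)
              simp
            rw [he]; exact h0
        · exact pos p q hc hp hn
    ext x
    simp only [Set.mem_univ, iff_true]
    induction x using Quotient.ind with
    | _ v => exact key _ v le_rfl
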